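/- Let t be a positive even integer and n = kt/2 for a positive integer k. Then the minimum size of a t-monopoly in K_n □ K_n equals kt²/4. -/
import Mathlib

open SimpleGraph

/-- `M` is a `t`-monopoly in `G`: every vertex outside `M` has at least `t` neighbors in `M`. -/
def IsMonopoly {V : Type*} (G : SimpleGraph V) (t : ℕ) (M : Set V) : Prop :=
  ∀ v ∉ M, t ≤ (G.neighborSet v ∩ M).ncard

/-- The `t`-monopoly number: least cardinality of a `t`-monopoly. -/
noncomputable def monNum {V : Type*} (G : SimpleGraph V) (t : ℕ) : ℕ :=
  sInf {k | ∃ M : Set V, IsMonopoly G t M ∧ M.ncard = k}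

open Finset in
lemma neighbor_count {n : ℕ} (M : Set (Fin n × Fin n)) (v : Fin n × Fin n) (hv : v ∉ M) :
    (((completeGraph (Fin n)).boxProd (completeGraph (Fin n))).neighborSet v ∩ M).ncard
      = {w ∈ M | w.1 = v.1}.ncard + {w ∈ M | w.2 = v.2}.ncard := by
  classical
  rw [Set.ncard_eq_toFinset_card', Set.ncard_eq_toFinset_card', Set.ncard_eq_toFinset_card']
  have hset : (((completeGraph (Fin n)).boxProd (completeGraph (Fin n))).neighborSet v ∩ M).toFinset
      = {w ∈ M | w.1 = v.1}.toFinset ∪ {w ∈ M | w.2 = v.2}.toFinset := by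
    ext w
    simp only [Set.mem_toFinset, Set.mem_inter_iff, mem_neighborSet, boxProd_adj,
      Finset.mem_union, Set.mem_sep_iff, completeGraph_eq_top, top_adj]
    constructor
    · rintro ⟨h, hw⟩
      rcases h with ⟨h1, h2⟩ | ⟨h1, h2⟩
      · exact Or.inr ⟨hw, h2.symm⟩
      · exact Or.inl ⟨hw, h2.symm⟩
    · rintro (⟨hw, h1⟩ | ⟨hw, h2⟩)
      · refine ⟨Or.inr ⟨?_, h1.symm⟩, hw⟩
        intro h; apply hv
        have : w = v := Prod.ext h1 (by simpa using h.symm)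
        rwa [← this]
      · refine ⟨Or.inl ⟨?_, h2.symm⟩, hw⟩
        intro h; apply hv
        have : w = v := Prod.ext (by simpa using h.symm) h2
        rwa [← this]
  rw [hset, Finset.card_union_of_disjoint]
  rw [Finset.disjoint_left]
  rintro w hw1 hw2
  simp only [Set.mem_toFinset, Set.mem_sep_iff] at hw1 hw2
  exact hv (Prod.ext hw1.2 hw2.2 ▸ hw1.1)

open Finset in
set_option maxHeartbeats 1000000 in
lemma rook_lower_bound {n s : ℕ} (hs : 0 < s) (hsn : s ≤ n) (M : Set (Fin n × Fin n))
    (hM : IsMonopoly ((completeGraph (Fin n)).boxProd (completeGraph (Fin n))) (2 * s) M) :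
    s * n ≤ M.ncard := by
  classical
  set F := M.toFinset with hF
  set m := F.card with hm
  have hMncard : M.ncard = m := Set.ncard_eq_toFinset_card' M
  rw [hMncard]
  set r : Fin n → ℕ := fun i => (F.filter (fun w => w.1 = i)).card with hr
  set c : Fin n → ℕ := fun j => (F.filter (fun w => w.2 = j)).card with hc
  have hrsum : ∑ i, r i = m :=
    (Finset.card_eq_sum_card_fiberwise (f := Prod.fst) (t := Finset.univ)
      (fun v _ => Finset.mem_univ _)).symm
  have hcsum : ∑ j, c j = m :=
    (Finset.card_eq_sum_card_fiberwise (f := Prod.snd) (t := Finset.univ)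
      (fun v _ => Finset.mem_univ _)).symm
  have hmn : m ≤ n * n := by
    calc m ≤ Fintype.card (Fin n × Fin n) := Finset.card_le_univ F
    _ = n * n := by simp
  have htot : ∑ v : Fin n × Fin n, (r v.1 + c v.2) = 2 * (n * m) := by
    rw [Finset.sum_add_distrib]
    have h1 : ∑ v : Fin n × Fin n, r v.1 = n * m := by
      rw [Fintype.sum_prod_type]
      simp only [Finset.sum_const, Finset.card_univ, Fintype.card_fin, smul_eq_mul]
      rw [← Finset.mul_sum, hrsum]
    have h2 : ∑ v : Fin n × Fin n, c v.2 = n * m := by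
      rw [Fintype.sum_prod_type_right]
      simp only [Finset.sum_const, Finset.card_univ, Fintype.card_fin, smul_eq_mul]
      rw [← Finset.mul_sum, hcsum]
    rw [h1, h2]; ring
  have hinr : ∑ v ∈ F, r v.1 = ∑ i, (r i) ^ 2 := by
    rw [← Finset.sum_fiberwise_of_maps_to (g := Prod.fst) (t := Finset.univ)
      (fun v _ => Finset.mem_univ _)]
    refine Finset.sum_congr rfl fun i _ => ?_
    have he : ∀ v ∈ F.filter (fun w => w.1 = i), r v.1 = r i := fun v hv => by
      rw [(Finset.mem_filter.mp hv).2]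
    rw [Finset.sum_congr rfl he, Finset.sum_const, smul_eq_mul, sq, hr]
  have hinc : ∑ v ∈ F, c v.2 = ∑ j, (c j) ^ 2 := by
    rw [← Finset.sum_fiberwise_of_maps_to (g := Prod.snd) (t := Finset.univ)
      (fun v _ => Finset.mem_univ _)]
    refine Finset.sum_congr rfl fun j _ => ?_
    have he : ∀ v ∈ F.filter (fun w => w.2 = j), c v.2 = c j := fun v hv => by
      rw [(Finset.mem_filter.mp hv).2]
    rw [Finset.sum_congr rfl he, Finset.sum_const, smul_eq_mul, sq, hc]
  have houtsum : (n * n - m) * (2 * s) ≤ ∑ v ∈ Fᶜ, (r v.1 + c v.2) := by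
    have hcard : Fᶜ.card = n * n - m := by
      rw [Finset.card_compl]; simp [hm]
    rw [← hcard, ← smul_eq_mul]
    refine Finset.card_nsmul_le_sum _ _ _ fun v hv => ?_
    have hvM : v ∉ M := by
      intro h
      exact (Finset.mem_compl.mp hv) (Set.mem_toFinset.mpr h)
    have h2s := hM v hvM
    rw [neighbor_count M v hvM] at h2s
    have e1 : {w ∈ M | w.1 = v.1}.ncard = r v.1 := by
      rw [Set.ncard_eq_toFinset_card']
      congr 1
      ext w
      simp [hF]
    have e2 : {w ∈ M | w.2 = v.2}.ncard = c v.2 := by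
      rw [Set.ncard_eq_toFinset_card']
      congr 1
      ext w
      simp [hF]
    rw [e1, e2] at h2s
    exact h2s
  have hsplit : ∑ v ∈ F, (r v.1 + c v.2) + ∑ v ∈ Fᶜ, (r v.1 + c v.2)
      = 2 * (n * m) := by rw [Finset.sum_add_sum_compl, htot]
  have hcsr : (m : ℤ) ^ 2 ≤ (n : ℤ) * ∑ i, ((r i : ℤ)) ^ 2 := by
    have := sq_sum_le_card_mul_sum_sq (s := (Finset.univ : Finset (Fin n)))
      (f := fun i => (r i : ℤ))
    simpa [← Nat.cast_sum, hrsum] using this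
  have hcsc : (m : ℤ) ^ 2 ≤ (n : ℤ) * ∑ j, ((c j : ℤ)) ^ 2 := by
    have := sq_sum_le_card_mul_sum_sq (s := (Finset.univ : Finset (Fin n)))
      (f := fun j => (c j : ℤ))
    simpa [← Nat.cast_sum, hcsum] using this
  have key : ((n : ℤ) * n - m) * (2 * s) + (∑ i, ((r i : ℤ)) ^ 2 + ∑ j, ((c j : ℤ)) ^ 2)
      ≤ 2 * ((n : ℤ) * m) := by
    have h2 : (∑ v ∈ F, (r v.1 + c v.2) : ℕ) = ∑ i, (r i)^2 + ∑ j, (c j)^2 := by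
      rw [Finset.sum_add_distrib, hinr, hinc]
    have h3 := hsplit
    rw [h2] at h3
    have h4 : ((n * n - m) * (2 * s) : ℕ) + ((∑ i, (r i)^2 + ∑ j, (c j)^2) : ℕ)
        ≤ 2 * (n * m) := by omega
    calc ((n : ℤ) * n - m) * (2 * s) + (∑ i, ((r i : ℤ)) ^ 2 + ∑ j, ((c j : ℤ)) ^ 2)
        = (((n * n - m) * (2 * s) + ((∑ i, (r i)^2 + ∑ j, (c j)^2)) : ℕ) : ℤ) := by
          push_cast [Nat.cast_sub hmn]; ring
      _ ≤ ((2 * (n * m) : ℕ) : ℤ) := by exact_mod_cast h4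
      _ = 2 * ((n : ℤ) * m) := by push_cast; ring
  by_contra hcon
  push_neg at hcon
  have hcon' : (m : ℤ) < (s : ℤ) * n := by exact_mod_cast hcon
  have hsn' : (s : ℤ) ≤ n := by exact_mod_cast hsn
  have hs' : (0 : ℤ) < s := by exact_mod_cast hs
  have hmn' : (m : ℤ) ≤ n * n := by exact_mod_cast hmn
  have hmul : (n : ℤ) * (((n : ℤ) * n - m) * (2 * s)) + 2 * (m : ℤ)^2
      ≤ (n : ℤ) * (2 * ((n : ℤ) * m)) := by
    have := mul_le_mul_of_nonneg_left key (by positivity : (0:ℤ) ≤ n)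
    nlinarith [hcsr, hcsc]
  nlinarith [mul_pos (sub_pos.mpr hcon') (by nlinarith : (0:ℤ) < (n:ℤ)*n - m)]

open Finset in
lemma block_card {n s q : ℕ} (hs : 0 < s) (hq : (q + 1) * s ≤ n) :
    (Finset.univ.filter (fun j : Fin n => j.val / s = q)).card = s := by
  have hq' : q * s + s ≤ n := by rw [add_mul, one_mul] at hq; omega
  have himg : Finset.univ.filter (fun j : Fin n => j.val / s = q)
      = (Finset.univ : Finset (Fin s)).image
          (fun x => (⟨q * s + x.val, by have := x.isLt; omega⟩ : Fin n)) := by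
    ext j
    simp only [Finset.mem_filter, Finset.mem_univ, true_and, Finset.mem_image]
    constructor
    · intro h
      have h1 := Nat.div_add_mod j.val s
      rw [h] at h1
      have hc : s * q = q * s := Nat.mul_comm s q
      refine ⟨⟨j.val % s, Nat.mod_lt _ hs⟩, ?_⟩
      apply Fin.ext
      show q * s + j.val % s = j.val
      omega
    · rintro ⟨x, rfl⟩
      show (q * s + x.val) / s = q
      rw [mul_comm, Nat.mul_add_div hs, Nat.div_eq_of_lt x.isLt]
      omega
  rw [himg, Finset.card_image_of_injective, Finset.card_univ, Fintype.card_fin]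
  intro a b h
  have := congrArg Fin.val h
  simp only [] at this
  exact Fin.ext (by omega)

open Finset in
lemma rook_upper_bound {n s k : ℕ} (hs : 0 < s) (hk : 0 < k) (hn : n = k * s) :
    ∃ M : Set (Fin n × Fin n),
      IsMonopoly ((completeGraph (Fin n)).boxProd (completeGraph (Fin n))) (2 * s) M ∧
      M.ncard = n * s := by
  classical
  set M : Set (Fin n × Fin n) := {v | v.1.val / s = v.2.val / s} with hMdef
  have hqle : ∀ i : Fin n, (i.val / s + 1) * s ≤ n := by
    intro i
    have h1 : i.val / s < k := (Nat.div_lt_iff_lt_mul hs).mpr (by omega)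
    calc (i.val / s + 1) * s ≤ k * s := Nat.mul_le_mul_right s h1
    _ = n := hn.symm
  have hrow : ∀ i : Fin n, (M.toFinset.filter (fun w => w.1 = i)).card = s := by
    intro i
    have himg : M.toFinset.filter (fun w => w.1 = i)
        = (Finset.univ.filter (fun j : Fin n => j.val / s = i.val / s)).image
            (fun j => (i, j)) := by
      ext w
      simp only [Finset.mem_filter, Set.mem_toFinset, hMdef, Set.mem_setOf_eq,
        Finset.mem_image, Finset.mem_univ, true_and]
      constructor
      · rintro ⟨hm, h1⟩
        exact ⟨w.2, by rw [← h1]; exact hm.symm, by rw [← h1]⟩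
      · rintro ⟨x, hx, rfl⟩
        exact ⟨hx.symm, rfl⟩
    rw [himg, Finset.card_image_of_injective _ (fun a b h => (Prod.ext_iff.mp h).2),
      block_card hs (hqle i)]
  have hcol : ∀ j : Fin n, (M.toFinset.filter (fun w => w.2 = j)).card = s := by
    intro j
    have himg : M.toFinset.filter (fun w => w.2 = j)
        = (Finset.univ.filter (fun i : Fin n => i.val / s = j.val / s)).image
            (fun i => (i, j)) := by
      ext w
      simp only [Finset.mem_filter, Set.mem_toFinset, hMdef, Set.mem_setOf_eq,
        Finset.mem_image, Finset.mem_univ, true_and]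
      constructor
      · rintro ⟨hm, h1⟩
        exact ⟨w.1, by rw [← h1]; exact hm, by rw [← h1]⟩
      · rintro ⟨x, hx, rfl⟩
        exact ⟨hx, rfl⟩
    rw [himg, Finset.card_image_of_injective _ (fun a b h => (Prod.ext_iff.mp h).1),
      block_card hs (hqle j)]
  refine ⟨M, ?_, ?_⟩
  · intro v hv
    rw [neighbor_count M v hv]
    have e1 : {w ∈ M | w.1 = v.1}.ncard = s := by
      have hx : {w ∈ M | w.1 = v.1}.toFinset = M.toFinset.filter (fun w => w.1 = v.1) := by
        ext w; simp [hMdef]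
      rw [Set.ncard_eq_toFinset_card', hx, hrow v.1]
    have e2 : {w ∈ M | w.2 = v.2}.ncard = s := by
      have hx : {w ∈ M | w.2 = v.2}.toFinset = M.toFinset.filter (fun w => w.2 = v.2) := by
        ext w; simp [hMdef]
      rw [Set.ncard_eq_toFinset_card', hx, hcol v.2]
    rw [e1, e2]
    omega
  · rw [Set.ncard_eq_toFinset_card']
    rw [Finset.card_eq_sum_card_fiberwise (f := Prod.fst) (t := Finset.univ)
      (fun v _ => Finset.mem_univ _)]
    rw [Finset.sum_congr rfl (fun i _ => hrow i), Finset.sum_const, Finset.card_univ,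
      Fintype.card_fin, smul_eq_mul]

/-- For even `t > 0` and `n = kt/2` with `k > 0`, `mon_t(K_n □ K_n) = kt²/4`. -/
theorem mon_rook_blocks (n k t : ℕ) (ht : Even t) (ht0 : 0 < t) (hk : 0 < k)
    (hn : n = k * t / 2) :
    monNum ((completeGraph (Fin n)).boxProd (completeGraph (Fin n))) t = k * t ^ 2 / 4 := by
  obtain ⟨s, hts⟩ := ht
  have ht2 : t = 2 * s := by omega
  have hs : 0 < s := by omega
  have hn' : n = k * s := by
    rw [hn, ht2, show k * (2 * s) = 2 * (k * s) by ring, Nat.mul_div_cancel_left _ two_pos]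
  have htarget : k * t ^ 2 / 4 = k * (s * s) := by
    rw [ht2, show k * (2 * s) ^ 2 = 4 * (k * (s * s)) by ring,
      Nat.mul_div_cancel_left _ (by norm_num)]
  rw [htarget, ht2]
  obtain ⟨M, hMono, hcard⟩ := rook_upper_bound hs hk hn'
  have hmem : k * (s * s) ∈ {m | ∃ M : Set (Fin n × Fin n),
      IsMonopoly ((completeGraph (Fin n)).boxProd (completeGraph (Fin n))) (2 * s) M ∧
      M.ncard = m} := ⟨M, hMono, by rw [hcard, hn']; ring⟩
  rw [monNum]
  apply le_antisymm
  · exact Nat.sInf_le hmem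
  · apply le_csInf ⟨_, hmem⟩
    rintro m ⟨M', hM', rfl⟩
    have hlb := rook_lower_bound hs (by rw [hn']; exact Nat.le_mul_of_pos_left s hk) M' hM'
    calc k * (s * s) = s * n := by rw [hn']; ring
    _ ≤ _ := hlb
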